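/- Let Λ = ⊕_{g∈G} Λ_g be a strongly G-graded ring with G a finite group whose order |G| is invertible in Λ. If the identity component Δ = Λ_1 is hereditary, then Λ is hereditary. -/

import Mathlib

open Pointwise
/-- A strong grading of the ring `Λ` by the group `G`: `Λ` is the internal direct
sum of the additive subgroups `A g`, and `A g * A h = A (g * h)` for all `g, h`. -/
structure IsStrongGrading {G Λ : Type*} [Group G] [Ring Λ] [DecidableEq G]
    (A : G → AddSubgroup Λ) : Prop where
  internal : DirectSum.IsInternal A
  one_mem : (1 : Λ) ∈ A 1
  mul_mem : ∀ (g h : G), ∀ a ∈ A g, ∀ b ∈ A h, a * b ∈ A (g * h)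
  strong : ∀ g h : G, A (g * h) ≤ AddSubgroup.closure ((A g : Set Λ) * (A h : Set Λ))

/-- `Λ_g ≅ Λ_h` as `Δ`-bimodules (`Δ = Λ_1`): an additive equivalence compatible
with left and right multiplication by elements of the identity component. -/
def ComponentBimodIso {G Λ : Type*} [Group G] [Ring Λ]
    (A : G → AddSubgroup Λ) (g h : G) : Prop :=
  ∃ f : A g ≃+ A h,
    (∀ d ∈ A (1 : G), ∀ x y : A g, (y : Λ) = d * (x : Λ) → ((f y : Λ) = d * (f x : Λ))) ∧
    (∀ d ∈ A (1 : G), ∀ x y : A g, (y : Λ) = (x : Λ) * d → ((f y : Λ) = (f x : Λ) * d))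

/-- A ring is *left hereditary* iff every left ideal is projective. -/
def IsLeftHereditary (R : Type*) [Ring R] : Prop :=
  ∀ I : Submodule R R, Module.Projective R I

section SGHelpers

private lemma SG_exists_dual_family {G Λ : Type*} [Group G] [Ring Λ] [DecidableEq G]
    (A : G → AddSubgroup Λ) (hA : IsStrongGrading A) (g : G) :
    ∃ (n : ℕ) (u v : Fin n → Λ), (∀ i, u i ∈ A g) ∧ (∀ i, v i ∈ A g⁻¹) ∧
      ∑ i, u i * v i = 1 := by
  have h1 : (1 : Λ) ∈ AddSubgroup.closure ((A g : Set Λ) * (A g⁻¹ : Set Λ)) := by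
    apply hA.strong g g⁻¹
    rw [mul_inv_cancel]
    exact hA.one_mem
  have key : ∀ x ∈ AddSubgroup.closure ((A g : Set Λ) * (A g⁻¹ : Set Λ)),
      ∃ (n : ℕ) (u v : Fin n → Λ), (∀ i, u i ∈ A g) ∧ (∀ i, v i ∈ A g⁻¹) ∧
        ∑ i, u i * v i = x := by
    intro x hx
    induction hx using AddSubgroup.closure_induction with
    | mem y hy =>
      obtain ⟨a, ha, b, hb, rfl⟩ := hy
      exact ⟨1, fun _ => a, fun _ => b, fun _ => ha, fun _ => hb, by simp⟩
    | zero => exact ⟨0, ![], ![], fun i => i.elim0, fun i => i.elim0, by simp⟩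
    | add x y hx hy ihx ihy =>
      obtain ⟨n₁, u₁, v₁, hu₁, hv₁, hs₁⟩ := ihx
      obtain ⟨n₂, u₂, v₂, hu₂, hv₂, hs₂⟩ := ihy
      refine ⟨n₁ + n₂, Fin.append u₁ u₂, Fin.append v₁ v₂, ?_, ?_, ?_⟩
      · intro i
        induction i using Fin.addCases with
        | left j => rw [Fin.append_left]; exact hu₁ j
        | right j => rw [Fin.append_right]; exact hu₂ j
      · intro i
        induction i using Fin.addCases with
        | left j => rw [Fin.append_left]; exact hv₁ j
        | right j => rw [Fin.append_right]; exact hv₂ j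
      · rw [Fin.sum_univ_add]
        simp only [Fin.append_left, Fin.append_right, hs₁, hs₂]
    | neg x hx ih =>
      obtain ⟨n, u, v, hu, hv, hs⟩ := ih
      exact ⟨n, fun i => -u i, v, fun i => (A g).neg_mem (hu i), hv,
        by simp only [neg_mul, Finset.sum_neg_distrib, hs]⟩
  exact key 1 h1


section
variable {G Λ : Type*} [Group G] [Fintype G] [Ring Λ] [DecidableEq G]

private lemma SG_exists_proj (A : G → AddSubgroup Λ) (hint : DirectSum.IsInternal A) :
    ∃ π : G → Λ →+ Λ, (∀ g l, π g l ∈ A g) ∧ (∀ l, ∑ g, π g l = l) ∧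
      (∀ (x : ∀ g, Λ) (hx : ∀ g, x g ∈ A g) (g : G), π g (∑ h, x h) = x g) := by
  set e : (DirectSum G fun g => A g) ≃+ Λ :=
    AddEquiv.ofBijective (DirectSum.coeAddMonoidHom A) hint with he
  have ecoe : ∀ y : DirectSum G fun g => A g, e y = DirectSum.coeAddMonoidHom A y :=
    fun _ => rfl
  refine ⟨fun g => (AddMonoidHom.mk' (fun y : DirectSum G fun g' => A g' => ((y g : Λ)))
      (by intro a b; simp)).comp e.symm.toAddMonoidHom, fun g l => (e.symm l g).2, ?_, ?_⟩
  · intro l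
    have : ∑ g, ((e.symm l g : Λ)) = e (e.symm l) := by
      rw [ecoe]
      conv_rhs => rw [← DirectSum.sum_univ_of (e.symm l)]
      rw [map_sum]
      refine Finset.sum_congr rfl fun g _ => ?_
      rw [DirectSum.coeAddMonoidHom_of]
    exact (by simpa using this : ∑ g, ((e.symm l g : Λ)) = l)
  · intro x hx g
    set X : DirectSum G fun g' => A g' := ∑ h, DirectSum.of (fun g' => ↥(A g')) h ⟨x h, hx h⟩
      with hX
    have heX : e X = ∑ h, x h := by
      rw [ecoe, hX, map_sum]
      refine Finset.sum_congr rfl fun h _ => ?_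
      rw [DirectSum.coeAddMonoidHom_of]
    have hsymm : e.symm (∑ h, x h) = X := by rw [← heX, AddEquiv.symm_apply_apply]
    have hXg : ((X g : Λ)) = x g := by
      rw [hX, DFinsupp.finset_sum_apply, AddSubmonoidClass.coe_finset_sum]
      rw [Finset.sum_eq_single g]
      · rw [DirectSum.of_eq_same]
      · intro h _ hne
        rw [DirectSum.of_eq_of_ne _ _ _ hne.symm]
        rfl
      · intro hg; exact absurd (Finset.mem_univ g) hg
    simp only [AddMonoidHom.comp_apply, AddMonoidHom.mk'_apply, AddEquiv.coe_toAddMonoidHom,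
      hsymm, hXg]
    exact hXg
end

private lemma SG_projective_of_injective_into_pi {R : Type*} [Ring R]
    (hher : IsLeftHereditary R) :
    ∀ (N : ℕ) (M : Type*) [AddCommGroup M] [Module R M] (f : M →ₗ[R] (Fin N → R)),
      Function.Injective f → Module.Projective R M := by
  intro N
  induction N with
  | zero =>
    intro M _ _ f hf
    have : Subsingleton M := ⟨fun a b => hf (by ext i; exact i.elim0)⟩
    infer_instance
  | succ N ih =>
    intro M _ _ f hf
    set π : M →ₗ[R] R := (LinearMap.proj (Fin.last N)).comp f with hπ
    set J : Submodule R R := LinearMap.range π with hJ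
    have hPJ : Module.Projective R J := hher J
    obtain ⟨σ, hσ⟩ := Module.projective_lifting_property π.rangeRestrict
      (LinearMap.id : J →ₗ[R] J) π.surjective_rangeRestrict
    set K : Submodule R M := LinearMap.ker π with hK
    have hPK : Module.Projective R K := by
      apply ih K ((LinearMap.funLeft R R Fin.castSucc).comp (f.comp K.subtype))
      intro x y hxy
      apply Subtype.ext
      apply hf
      funext i
      induction i using Fin.lastCases with
      | last =>
        have hx : π (x : M) = 0 := x.2
        have hy : π (y : M) = 0 := y.2
        exact hx.trans hy.symm
      | cast j =>
        exact congrFun hxy j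
    -- build the equivalence M ≃ₗ K × J
    have hker : ∀ m : M, π (m - σ (π.rangeRestrict m)) = 0 := by
      intro m
      have h1 : π (σ (π.rangeRestrict m)) = π m := by
        have := congrArg (fun z => ((z : J →ₗ[R] J) (π.rangeRestrict m) : R)) hσ
        simpa using this
      simp [map_sub, h1]
    set c : M →ₗ[R] K := (LinearMap.id - σ.comp π.rangeRestrict).codRestrict K
      (fun m => LinearMap.mem_ker.mpr (hker m)) with hc
    set φ : M →ₗ[R] K × J := c.prod π.rangeRestrict with hφ
    set ψ : K × J →ₗ[R] M :=
      K.subtype.comp (LinearMap.fst R K J) + σ.comp (LinearMap.snd R K J) with hψ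
    have h1 : ψ.comp φ = LinearMap.id := by
      ext m
      simp [hψ, hφ, hc]
    have h2 : φ.comp ψ = LinearMap.id := by
      apply LinearMap.ext
      rintro ⟨k, j⟩
      have hρk : π.rangeRestrict (k : M) = 0 :=
        Subtype.ext (by simpa using (k.2 : π (k : M) = 0))
      have hρσ : π.rangeRestrict (σ j) = j := by
        have := congrArg (fun z => (z : ↥J →ₗ[R] ↥J) j) hσ
        exact this
      apply Prod.ext
      · apply Subtype.ext
        show ((φ (ψ (k, j))).1 : M) = (k : M)
        simp [hφ, hψ, hc, map_add, hρk, hρσ]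
      · show (φ (ψ (k, j))).2 = j
        simp [hφ, hψ, map_add, hρk, hρσ]
    have e : (K × J) ≃ₗ[R] M := LinearEquiv.ofLinear ψ φ h1 h2
    exact Module.Projective.of_equiv e


section
variable {G Λ : Type*} [Group G] [Fintype G] [Ring Λ] [DecidableEq G]

private lemma SG_key_linearity (A : G → AddSubgroup Λ)
    (hmul : ∀ (g h : G), ∀ a ∈ A g, ∀ b ∈ A h, a * b ∈ A (g * h))
    (htop : ∀ x : Λ, x ∈ ⨆ g, A g)
    {M F : Type*} [AddCommGroup M] [Module Λ M] [AddCommGroup F] [Module Λ F]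
    (s₀ : M →+ F)
    (hdl : ∀ d ∈ A (1 : G), ∀ x : M, s₀ (d • x) = d • s₀ x)
    (n : G → ℕ) (u v : (g : G) → Fin (n g) → Λ)
    (hu : ∀ g i, u g i ∈ A g) (hv : ∀ g i, v g i ∈ A g⁻¹)
    (huv : ∀ g, ∑ i, u g i * v g i = 1)
    (l : Λ) (m : M) :
    ∑ g, ∑ i, u g i • s₀ ((v g i * l) • m) = l • ∑ g, ∑ i, u g i • s₀ (v g i • m) := by
  refine AddSubgroup.iSup_induction (G := Λ) A (C := fun l =>
      ∑ g, ∑ i, u g i • s₀ ((v g i * l) • m) = l • ∑ g, ∑ i, u g i • s₀ (v g i • m))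
      (htop l) ?_ ?_ ?_
  · intro h l hl
    have hg : ∀ g, ∑ i, u g i • s₀ ((v g i * l) • m)
        = ∑ j, (l * u (h⁻¹ * g) j) • s₀ (v (h⁻¹ * g) j • m) := by
      intro g
      set k := h⁻¹ * g with hk
      have e1 : ∀ i, u g i • s₀ ((v g i * l) • m)
          = ∑ j, (u g i * (v g i * l * u k j)) • s₀ (v k j • m) := by
        intro i
        have e2 : (v g i * l) • m = ∑ j, (v g i * l * u k j) • ((v k j) • m) := by
          have : (v g i * l) • m = ∑ j, ((v g i * l) * (u k j * v k j)) • m := by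
            rw [← Finset.sum_smul, ← Finset.mul_sum, huv k, mul_one]
          rw [this]
          refine Finset.sum_congr rfl fun j _ => ?_
          rw [← mul_assoc, mul_smul]
        have hd : ∀ j, (v g i * l * u k j) ∈ A 1 := by
          intro j
          have h1 : v g i * l ∈ A (g⁻¹ * h) := hmul _ _ _ (hv g i) _ hl
          have h2 : v g i * l * u k j ∈ A (g⁻¹ * h * (h⁻¹ * g)) := hmul _ _ _ h1 _ (hu k j)
          have : g⁻¹ * h * (h⁻¹ * g) = 1 := by group
          rwa [this] at h2
        rw [e2, map_sum, Finset.smul_sum]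
        refine Finset.sum_congr rfl fun j _ => ?_
        rw [hdl _ (hd j), smul_smul]
      calc ∑ i, u g i • s₀ ((v g i * l) • m)
          = ∑ i, ∑ j, (u g i * (v g i * l * u k j)) • s₀ (v k j • m) :=
            Finset.sum_congr rfl fun i _ => e1 i
        _ = ∑ j, ∑ i, (u g i * (v g i * l * u k j)) • s₀ (v k j • m) := Finset.sum_comm
        _ = ∑ j, (l * u k j) • s₀ (v k j • m) := by
            refine Finset.sum_congr rfl fun j _ => ?_
            rw [← Finset.sum_smul]
            congr 1
            calc ∑ i, u g i * (v g i * l * u k j)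
                = ∑ i, (u g i * v g i) * (l * u k j) := by
                  refine Finset.sum_congr rfl fun i _ => by simp [mul_assoc]
              _ = (∑ i, u g i * v g i) * (l * u k j) := by rw [Finset.sum_mul]
              _ = l * u k j := by rw [huv g, one_mul]
    calc ∑ g, ∑ i, u g i • s₀ ((v g i * l) • m)
        = ∑ g, ∑ j, (l * u (h⁻¹ * g) j) • s₀ (v (h⁻¹ * g) j • m) :=
          Finset.sum_congr rfl fun g _ => hg g
      _ = ∑ k, ∑ j, (l * u k j) • s₀ (v k j • m) := by
          exact Fintype.sum_equiv (Equiv.mulLeft h⁻¹) _ _ (fun g => rfl)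
      _ = l • ∑ g, ∑ i, u g i • s₀ (v g i • m) := by
          rw [Finset.smul_sum]
          refine Finset.sum_congr rfl fun k _ => ?_
          rw [Finset.smul_sum]
          refine Finset.sum_congr rfl fun j _ => ?_
          rw [mul_smul]
  · simp
  · intro x y hx hy
    calc ∑ g, ∑ i, u g i • s₀ ((v g i * (x + y)) • m)
        = ∑ g, ∑ i, (u g i • s₀ ((v g i * x) • m) + u g i • s₀ ((v g i * y) • m)) := by
          refine Finset.sum_congr rfl fun g _ => Finset.sum_congr rfl fun i _ => ?_
          rw [mul_add, add_smul, map_add, smul_add]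
      _ = ∑ g, ∑ i, u g i • s₀ ((v g i * x) • m) + ∑ g, ∑ i, u g i • s₀ ((v g i * y) • m) := by
          rw [← Finset.sum_add_distrib]
          exact Finset.sum_congr rfl fun g _ => Finset.sum_add_distrib
      _ = (x + y) • ∑ g, ∑ i, u g i • s₀ (v g i • m) := by
          rw [hx, hy, add_smul]
end


end SGHelpers

/-- Let `Λ` be strongly graded by a finite group `G` whose order
is invertible in `Λ`. If the identity component `Δ = Λ_1` is hereditary, then so
is `Λ`. -/
theorem hereditary_of_coprime_order {G Λ : Type*} [Group G] [Fintype G] [Ring Λ]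
    [DecidableEq G]
    (A : G → AddSubgroup Λ) (hA : IsStrongGrading A)
    (hcard : IsUnit ((Fintype.card G : ℕ) : Λ))
    (D : Subring Λ) (hD : (D : Set Λ) = (A (1 : G) : Set Λ))
    (hher : IsLeftHereditary D) :
    IsLeftHereditary Λ := by
  intro I
  classical
  choose n u v hu hv huv using fun g => SG_exists_dual_family A hA g
  obtain ⟨π, hπmem, hπsum, hπuniq⟩ := SG_exists_proj A hA.internal
  have htop : ∀ x : Λ, x ∈ ⨆ g, A g := by
    intro x
    rw [← hπsum x]
    exact AddSubgroup.sum_mem _ fun g _ => AddSubgroup.mem_iSup_of_mem g (hπmem g x)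
  have hπd : ∀ d : Λ, d ∈ A 1 → ∀ (g : G) (x : Λ), π g (d * x) = d * π g x := by
    intro d hd g x
    have hx : d * x = ∑ h, d * π h x := by rw [← Finset.mul_sum, hπsum x]
    have h2 : π g (∑ h, d * π h x) = d * π g x := by
      apply hπuniq (fun h => d * π h x)
      intro h
      have := hA.mul_mem 1 h d hd (π h x) (hπmem h x)
      rwa [one_mul] at this
    rw [hx, h2]
  letI : Module D I := Module.compHom I D.subtype
  letI : Module D (I →₀ Λ) := Module.compHom _ D.subtype
  -- Step 1 : I is a projective D-module
  have cmem : ∀ (x : Λ) (g : G) (i : Fin (n g⁻¹)), π g x * u g⁻¹ i ∈ D := by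
    intro x g i
    have h1 := hA.mul_mem g g⁻¹ _ (hπmem g x) _ (hu g⁻¹ i)
    rw [mul_inv_cancel] at h1
    show _ ∈ (D : Set Λ)
    rw [hD]
    exact h1
  have hrec : ∀ (x : Λ) (g : G), π g x = ∑ i, (π g x * u g⁻¹ i) * v g⁻¹ i := by
    intro x g
    have hval : ∑ i, (π g x * u g⁻¹ i) * v g⁻¹ i = π g x * ∑ i, u g⁻¹ i * v g⁻¹ i := by
      rw [Finset.mul_sum]
      exact Finset.sum_congr rfl fun i _ => by rw [mul_assoc]
    rw [hval, huv g⁻¹, mul_one]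
  haveI hPI : Module.Projective D I := by
    set ι := (Σ g : G, Fin (n g⁻¹)) with hι
    let Ψ : I →ₗ[D] (ι → D) :=
      { toFun := fun x p => ⟨π p.1 (x : Λ) * u p.1⁻¹ p.2, cmem (x : Λ) p.1 p.2⟩
        map_add' := by
          intro a b
          funext p
          apply Subtype.ext
          show π p.1 ((a : Λ) + (b : Λ)) * u p.1⁻¹ p.2 = _
          rw [map_add, add_mul]
          rfl
        map_smul' := by
          intro d x
          funext p
          apply Subtype.ext
          show π p.1 ((d : Λ) * (x : Λ)) * u p.1⁻¹ p.2 = (d : Λ) * (π p.1 (x : Λ) * u p.1⁻¹ p.2)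
          have hdA : (d : Λ) ∈ A 1 := by
            rw [← SetLike.mem_coe, ← hD]
            exact d.2
          rw [hπd (d : Λ) hdA p.1 (x : Λ), mul_assoc] }
    have Ψinj : Function.Injective Ψ := by
      intro x y hxy
      have hcomp : ∀ (g : G) (i : Fin (n g⁻¹)),
          π g (x : Λ) * u g⁻¹ i = π g (y : Λ) * u g⁻¹ i := by
        intro g i
        have := congrFun hxy ⟨g, i⟩
        exact congrArg Subtype.val this
      have hg : ∀ g : G, π g (x : Λ) = π g (y : Λ) := by
        intro g
        rw [hrec (x : Λ) g, hrec (y : Λ) g]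
        exact Finset.sum_congr rfl fun i _ => by rw [hcomp g i]
      apply Subtype.ext
      rw [← hπsum (x : Λ), ← hπsum (y : Λ)]
      exact Finset.sum_congr rfl fun g _ => hg g
    let E := (LinearEquiv.funCongrLeft D D (Fintype.equivFin ι)).symm
    refine SG_projective_of_injective_into_pi hher (Fintype.card ι) I (E.toLinearMap.comp Ψ) ?_
    exact E.injective.comp Ψinj
  -- Step 2 : lift along the linear combination map
  set tot : (I →₀ Λ) →ₗ[Λ] I := Finsupp.linearCombination Λ id with htot
  have tsurj : Function.Surjective tot := Finsupp.linearCombination_id_surjective Λ I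
  let totD : (I →₀ Λ) →ₗ[D] I :=
    { toFun := tot
      map_add' := map_add tot
      map_smul' := fun d x => map_smul tot (d : Λ) x }
  obtain ⟨s₀, hs₀⟩ := Module.projective_lifting_property totD LinearMap.id
    (fun y => tsurj y)
  have hs₀' : ∀ x : I, tot (s₀ x) = x := fun x => LinearMap.congr_fun hs₀ x
  let S : I →+ (I →₀ Λ) := AddMonoidHom.mk' s₀ (map_add s₀)
  have hdl : ∀ d ∈ A (1 : G), ∀ x : I, S (d • x) = d • S x := by
    intro d hd x
    have hdD : d ∈ D := by
      show _ ∈ (D : Set Λ)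
      rw [hD]
      exact hd
    exact s₀.map_smul ⟨d, hdD⟩ x
  -- Step 3 : the averaged section
  set c : Λ := ↑hcard.unit⁻¹ with hc
  have hcomm : ∀ l : Λ, c * l = l * c := by
    intro l
    have h1 : Commute ((Fintype.card G : ℕ) : Λ) l := Nat.cast_commute _ l
    have h2 : Commute (↑hcard.unit : Λ) l := by rwa [IsUnit.unit_spec]
    exact h2.units_inv_left.eq
  set T : I → (I →₀ Λ) := fun x => ∑ g, ∑ i, u g i • S (v g i • x) with hT
  have Tsmul : ∀ (l : Λ) (x : I), T (l • x) = l • T x := by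
    intro l x
    have hkey := SG_key_linearity A hA.mul_mem htop S hdl n u v hu hv huv l x
    calc T (l • x) = ∑ g, ∑ i, u g i • S ((v g i * l) • x) := by
          refine Finset.sum_congr rfl fun g _ => Finset.sum_congr rfl fun i _ => by
            rw [mul_smul]
      _ = l • T x := hkey
  let s : I →ₗ[Λ] (I →₀ Λ) :=
    { toFun := fun x => c • T x
      map_add' := by
        intro a b
        have h : T (a + b) = T a + T b := by
          rw [hT]
          simp only [smul_add, map_add, Finset.sum_add_distrib]
        show c • T (a + b) = c • T a + c • T b
        rw [h, smul_add]
      map_smul' := by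
        intro l x
        show c • T (l • x) = l • (c • T x)
        rw [Tsmul, smul_smul, smul_smul, hcomm l] }
  refine Module.projective_def'.mpr ⟨s, ?_⟩
  apply LinearMap.ext
  intro x
  show tot (c • T x) = x
  rw [map_smul]
  have hTx : tot (T x) = ((Fintype.card G : ℕ) : Λ) • x := by
    have h1 : tot (T x) = ∑ g, ∑ i, u g i • (v g i • x) := by
      rw [hT, map_sum]
      refine Finset.sum_congr rfl fun g _ => ?_
      rw [map_sum]
      refine Finset.sum_congr rfl fun i _ => ?_
      rw [map_smul]
      congr 1
      exact hs₀' (v g i • x)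
    rw [h1]
    have h2 : ∀ g : G, ∑ i, u g i • (v g i • x) = x := by
      intro g
      have : ∑ i, u g i • (v g i • x) = (∑ i, u g i * v g i) • x := by
        rw [Finset.sum_smul]
        exact Finset.sum_congr rfl fun i _ => by rw [smul_smul]
      rw [this, huv g, one_smul]
    rw [Finset.sum_congr rfl fun g _ => h2 g, Finset.sum_const, Finset.card_univ,
      Nat.cast_smul_eq_nsmul]
  rw [hTx, smul_smul, hc]
  have hinv : (↑hcard.unit⁻¹ : Λ) * ((Fintype.card G : ℕ) : Λ) = 1 := by
    have h1 : (↑hcard.unit⁻¹ : Λ) * ↑hcard.unit = 1 := Units.inv_mul _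
    rwa [IsUnit.unit_spec] at h1
  exact (congrArg (fun z : Λ => z • x) hinv).trans (one_smul Λ x)
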